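/- If v_1, ..., v_{N+1} is an obtuse system in C^N with p_i = 1/(1 + ‖v_i‖²), then ∑_{i=1}^{N+1} p_i · |v_i⟩⟨v_i| = I, the identity operator on C^N. -/

import Mathlib

open scoped BigOperators InnerProductSpace ComplexConjugate

/-- **Obtuse systems are normalized.**
If `v 1, …, v (N+1)` is an obtuse system in `ℂ^N` with `p i = 1 / (1 + ‖v i‖²)`,
then `∑ i, p i • |v i⟩⟨v i| = I`, i.e. for every `x`,
`∑ i, p i • (⟪v i, x⟫ • v i) = x`. -/
theorem obtuse_resolution_identity (N : ℕ)
    (v : Fin (N + 1) → EuclideanSpace ℂ (Fin N))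
    (hobt : ∀ i j, i ≠ j → ⟪v i, v j⟫_ℂ = -1)
    (p : Fin (N + 1) → ℝ)
    (hp : ∀ i, p i = 1 / (1 + ‖v i‖ ^ 2)) :
    ∀ x : EuclideanSpace ℂ (Fin N),
      ∑ i, (p i : ℂ) • (⟪v i, x⟫_ℂ • v i) = x := by
  intro x
  have hppos : ∀ i, 0 < p i := by
    intro i; rw [hp i]; positivity
  set u : Fin (N + 1) → EuclideanSpace ℂ (Fin (N + 1)) :=
    fun i => WithLp.toLp 2 (Fin.snoc (v i) 1 : Fin (N + 1) → ℂ) with hu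
  have hinneru : ∀ i j, ⟪u i, u j⟫_ℂ = ⟪v i, v j⟫_ℂ + 1 := by
    intro i j
    simp [hu, PiLp.inner_apply, Fin.sum_univ_castSucc]
  set e : Fin (N + 1) → EuclideanSpace ℂ (Fin (N + 1)) :=
    fun i => ((Real.sqrt (p i) : ℝ) : ℂ) • u i with he
  have hsq : ∀ i, ((Real.sqrt (p i) : ℝ) : ℂ) * ((Real.sqrt (p i) : ℝ) : ℂ) = (p i : ℂ) := by
    intro i
    rw [← Complex.ofReal_mul, Real.mul_self_sqrt (hppos i).le]
  have hself : ∀ i, ⟪v i, v i⟫_ℂ + 1 = ((1 / p i : ℝ) : ℂ) := by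
    intro i
    rw [hp i, one_div_one_div, inner_self_eq_norm_sq_to_K]
    push_cast
    ring_nf
    rfl
  have honb : Orthonormal ℂ e := by
    rw [orthonormal_iff_ite]
    intro i j
    simp only [he, inner_smul_left, inner_smul_right, Complex.conj_ofReal, hinneru]
    by_cases h : i = j
    · subst h
      simp only [if_pos rfl]
      rw [hself i, ← mul_assoc, hsq i]
      have hne : (p i : ℂ) ≠ 0 := Complex.ofReal_ne_zero.mpr (hppos i).ne'
      push_cast
      field_simp
    · rw [hobt i j h]
      simp [h]
  have hcard : Fintype.card (Fin (N + 1)) =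
      Module.finrank ℂ (EuclideanSpace ℂ (Fin (N + 1))) := by
    simp
  let b : OrthonormalBasis (Fin (N + 1)) ℂ (EuclideanSpace ℂ (Fin (N + 1))) :=
    (basisOfOrthonormalOfCardEqFinrank honb hcard).toOrthonormalBasis
      (by rwa [coe_basisOfOrthonormalOfCardEqFinrank])
  have hb : ∀ i, b i = e i := fun i => by
    simp [b, Module.Basis.coe_toOrthonormalBasis, coe_basisOfOrthonormalOfCardEqFinrank]
  set y : EuclideanSpace ℂ (Fin (N + 1)) := WithLp.toLp 2 (Fin.snoc x 0 : Fin (N + 1) → ℂ) with hy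
  have hsum : ∑ i, ⟪e i, y⟫_ℂ • e i = y := by
    conv_rhs => rw [← b.sum_repr y]
    refine Finset.sum_congr rfl fun i _ => ?_
    rw [b.repr_apply_apply, hb i]
  have hiy : ∀ i, ⟪u i, y⟫_ℂ = ⟪v i, x⟫_ℂ := by
    intro i
    simp [hu, hy, PiLp.inner_apply, Fin.sum_univ_castSucc]
  have hsum2 : ∑ i, (p i : ℂ) • (⟪v i, x⟫_ℂ • u i) = y := by
    rw [← hsum]
    refine Finset.sum_congr rfl fun i _ => ?_
    simp only [he, inner_smul_left, Complex.conj_ofReal, hiy i, smul_smul]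
    rw [← hsq i]; ring_nf
  ext j
  have h3 := congrArg (fun z => z (Fin.castSucc j)) hsum2
  have hL : (∑ i, (p i : ℂ) • (⟪v i, x⟫_ℂ • u i)) (Fin.castSucc j)
      = ∑ i, (p i : ℂ) * (⟪v i, x⟫_ℂ * v i j) := by
    rw [WithLp.ofLp_sum, Finset.sum_apply]
    refine Finset.sum_congr rfl fun i _ => ?_
    simp [hu, smul_eq_mul]
  have hR : y (Fin.castSucc j) = x j := by simp [hy]
  rw [hL, hR] at h3
  calc (∑ i, (p i : ℂ) • (⟪v i, x⟫_ℂ • v i)) j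
      = ∑ i, (p i : ℂ) * (⟪v i, x⟫_ℂ * v i j) := by
        rw [WithLp.ofLp_sum, Finset.sum_apply]
        exact Finset.sum_congr rfl fun i _ => by simp [smul_eq_mul]
    _ = x j := h3
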